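/- Let G be a group generated by elements t₁, t₂, t₃, t₄, t₅, and set σ = t₁t₂t₃t₄t₅. Assume that σ tᵢ σ⁻¹ = t_{i+1} for 1 ≤ i ≤ 4, that tᵢ t_{i+1} tᵢ = t_{i+1} tᵢ t_{i+1} for 1 ≤ i ≤ 4, and that tᵢ t_j = t_j tᵢ whenever |i − j| ≥ 2. Then the commutator subgroup [G, G] is contained in the normal closure of {σ²} in G; equivalently, the quotient of G by the normal closure of σ² is cyclic, generated by the image of t₁. -/

import Mathlib

/-- Lemma 6.1 of the paper, group-theoretic content: if `G` is
generated by `t₁, …, t₅` satisfying the conjugation relations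
`σ tᵢ σ⁻¹ = tᵢ₊₁` for `σ = t₁t₂t₃t₄t₅`, the braid relations for adjacent
indices, and commutation for distant indices, then the commutator subgroup of
`G` is contained in the normal closure of `σ²`. -/
theorem commutator_le_normalClosure_sigma_sq {G : Type*} [Group G]
    (t₁ t₂ t₃ t₄ t₅ : G)
    (hgen : Subgroup.closure {t₁, t₂, t₃, t₄, t₅} = ⊤)
    (hc1 : (t₁ * t₂ * t₃ * t₄ * t₅) * t₁ * (t₁ * t₂ * t₃ * t₄ * t₅)⁻¹ = t₂)
    (hc2 : (t₁ * t₂ * t₃ * t₄ * t₅) * t₂ * (t₁ * t₂ * t₃ * t₄ * t₅)⁻¹ = t₃)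
    (hc3 : (t₁ * t₂ * t₃ * t₄ * t₅) * t₃ * (t₁ * t₂ * t₃ * t₄ * t₅)⁻¹ = t₄)
    (hc4 : (t₁ * t₂ * t₃ * t₄ * t₅) * t₄ * (t₁ * t₂ * t₃ * t₄ * t₅)⁻¹ = t₅)
    (hb1 : t₁ * t₂ * t₁ = t₂ * t₁ * t₂)
    (hb2 : t₂ * t₃ * t₂ = t₃ * t₂ * t₃)
    (hb3 : t₃ * t₄ * t₃ = t₄ * t₃ * t₄)
    (hb4 : t₄ * t₅ * t₄ = t₅ * t₄ * t₅)
    (hc13 : t₁ * t₃ = t₃ * t₁) (hc14 : t₁ * t₄ = t₄ * t₁)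
    (hc15 : t₁ * t₅ = t₅ * t₁) (hc24 : t₂ * t₄ = t₄ * t₂)
    (hc25 : t₂ * t₅ = t₅ * t₂) (hc35 : t₃ * t₅ = t₅ * t₃) :
    commutator G ≤ Subgroup.normalClosure {(t₁ * t₂ * t₃ * t₄ * t₅) ^ 2} := by
  set σ := t₁ * t₂ * t₃ * t₄ * t₅ with hσ
  set N := Subgroup.normalClosure {σ ^ 2} with hN
  let π : G →* G ⧸ N := QuotientGroup.mk' N
  have hs : π σ ^ 2 = 1 := by
    rw [← map_pow]
    exact (QuotientGroup.eq_one_iff _).2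
      (Subgroup.subset_normalClosure (Set.mem_singleton _))
  have e1 : π σ * π t₁ * (π σ)⁻¹ = π t₂ := by
    rw [← map_inv, ← map_mul, ← map_mul, hc1]
  have e2 : π σ * π t₂ * (π σ)⁻¹ = π t₃ := by
    rw [← map_inv, ← map_mul, ← map_mul, hc2]
  have e3 : π σ * π t₃ * (π σ)⁻¹ = π t₄ := by
    rw [← map_inv, ← map_mul, ← map_mul, hc3]
  have e4 : π σ * π t₄ * (π σ)⁻¹ = π t₅ := by
    rw [← map_inv, ← map_mul, ← map_mul, hc4]
  have hss : π σ * π σ = 1 := by rw [← sq]; exact hs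
  have sinv : (π σ)⁻¹ = π σ := inv_eq_iff_mul_eq_one.2 hss
  have h3 : π t₃ = π t₁ := by
    rw [← e2, ← e1, sinv]
    calc π σ * (π σ * π t₁ * π σ) * π σ = (π σ * π σ) * π t₁ * (π σ * π σ) := by
          group
      _ = π t₁ := by rw [hss]; simp
  have h4 : π t₄ = π t₂ := by
    rw [← e3, h3, e1]
  have h5 : π t₅ = π t₁ := by
    rw [← e4, h4, e2, h3]
  have hab : Commute (π t₁) (π t₂) := by
    have : π (t₁ * t₄) = π (t₄ * t₁) := by rw [hc14]
    rw [map_mul, map_mul, h4] at this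
    exact this
  have him : ∀ x ∈ ({t₁, t₂, t₃, t₄, t₅} : Set G), π x = π t₁ ∨ π x = π t₂ := by
    intro x hx
    rcases hx with rfl | rfl | rfl | rfl | rfl
    · exact Or.inl rfl
    · exact Or.inr rfl
    · exact Or.inl h3
    · exact Or.inr h4
    · exact Or.inl h5
  have base : ∀ x ∈ ({t₁, t₂, t₃, t₄, t₅} : Set G),
      ∀ y ∈ ({t₁, t₂, t₃, t₄, t₅} : Set G), Commute (π x) (π y) := by
    intro x hx y hy
    rcases him x hx with hx' | hx' <;> rcases him y hy with hy' | hy' <;>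
      rw [hx', hy'] <;>
      first
        | exact Commute.refl _
        | exact hab
        | exact hab.symm
  have key : ∀ g h : G, Commute (π g) (π h) := by
    have mem : ∀ g : G, g ∈ Subgroup.closure ({t₁, t₂, t₃, t₄, t₅} : Set G) := by
      intro g; rw [hgen]; trivial
    intro g h
    refine Subgroup.closure_induction (p := fun g _ => Commute (π g) (π h))
      (fun x hx => ?_) ?_ (fun x y _ _ hx hy => ?_) (fun x _ hx => ?_) (mem g)
    · refine Subgroup.closure_induction (p := fun h _ => Commute (π x) (π h))
        (fun y hy => base x hx y hy) ?_ (fun a b _ _ ha hb => ?_)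
        (fun a _ ha => ?_) (mem h)
      · simp only [map_one]; exact Commute.one_right (π x)
      · show Commute (π x) (π (a * b)); rw [map_mul]; exact ha.mul_right hb
      · show Commute (π x) (π a⁻¹); rw [map_inv]; exact Commute.inv_right ha
    · simp only [map_one]; exact Commute.one_left (π h)
    · show Commute (π (x * y)) (π h); rw [map_mul]; exact Commute.mul_left hx hy
    · show Commute (π x⁻¹) (π h); rw [map_inv]; exact Commute.inv_left hx
  rw [commutator_def, Subgroup.commutator_le]
  intro g _ h _
  refine (QuotientGroup.eq_one_iff _).1 ?_
  open scoped commutatorElement in show π ⁅g, h⁆ = 1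
  rw [map_commutatorElement, commutatorElement_eq_one_iff_commute]
  exact key g h
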